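/- For even a, the (a,1) knight's graph on [2a]^2 is not Hamiltonian. -/

import Mathlib

/-- The (a,b) knight's graph on `ℕ × ℕ`: `(x,y) ~ (x',y')` iff `{|x-x'|,|y-y'|} = {a,b}`. -/
def knightGraph (a b : ℕ) : SimpleGraph (ℕ × ℕ) :=
  SimpleGraph.fromRel (fun v w =>
    ((v.1 + a = w.1 ∨ w.1 + a = v.1) ∧ (v.2 + b = w.2 ∨ w.2 + b = v.2)) ∨
    ((v.1 + b = w.1 ∨ w.1 + b = v.1) ∧ (v.2 + a = w.2 ∨ w.2 + a = v.2)))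

/-- A closed walk is a knight's tour of the board `[n]^2` if it is a cycle whose support is
exactly the board `[n] × [n]`. -/
def IsBoardTour (a b n : ℕ) {v : ℕ × ℕ} (p : (knightGraph a b).Walk v v) : Prop :=
  p.IsCycle ∧ ∀ x : ℕ × ℕ, x ∈ p.support ↔ (x.1 < n ∧ x.2 < n)

/-- A (a,1) knight's tour is *structured* if it contains all the edges
`{(i,j), (i+a, j+(-1)^j)}` for `0 ≤ i,j ≤ a-1`. -/
def IsStructured (a : ℕ) {v : ℕ × ℕ} (p : (knightGraph a 1).Walk v v) : Prop :=
  ∀ i j : ℕ, i < a → j < a →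
    (Even j → s((i, j), (i + a, j + 1)) ∈ p.edges) ∧
    (Odd j → s((i, j), (i + a, j - 1)) ∈ p.edges)

/-- A (a,1) knight's tour is *A-linked* if it contains link A, the edge
`{(a-1,1), (a-2,a+1)}`. -/
def IsALinked (a : ℕ) {v : ℕ × ℕ} (p : (knightGraph a 1).Walk v v) : Prop :=
  s((a - 1, 1), (a - 2, a + 1)) ∈ p.edges

namespace NoTourAux

open Finset SimpleGraph

/-! ### Generic walk/cycle lemmas -/

lemma tail_mem {V : Type*} {G : SimpleGraph V} {v : V} (p : G.Walk v v)
    (hp : ¬ p.Nil) {u : V} (hu : u ∈ p.support) : u ∈ p.support.tail := by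
  cases p with
  | nil => simp at hp
  | cons h q =>
    simp only [SimpleGraph.Walk.support_cons, List.tail_cons]
    rcases (SimpleGraph.Walk.mem_support_iff (p := SimpleGraph.Walk.cons h q)).mp hu with h' | h'
    · subst h'; exact q.end_mem_support
    · simpa using h'

lemma mem_support_rotate_iff {V : Type*} [DecidableEq V] {G : SimpleGraph V} {v u : V}
    (p : G.Walk v v) (hp : ¬ p.Nil) (hu : u ∈ p.support) {x : V} :
    x ∈ (p.rotate u hu).support ↔ x ∈ p.support := by
  have hrot := SimpleGraph.Walk.support_rotate p u hu
  constructor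
  · intro hx
    rcases (SimpleGraph.Walk.mem_support_iff (p := p.rotate u hu)).mp hx with h' | h'
    · subst h'; exact hu
    · exact List.mem_of_mem_tail (hrot.mem_iff.mp h')
  · intro hx
    exact List.mem_of_mem_tail (hrot.mem_iff.mpr (tail_mem p hp hx))

lemma path_filter_one {V : Type*} [DecidableEq V] {G : SimpleGraph V} :
    ∀ {w u : V} (q : G.Walk w u), q.IsPath → w ≠ u →
    (q.edges.filter (fun e => decide (u ∈ e))).length = 1 := by
  intro w u q
  induction q with
  | nil => intro _ h; exact absurd rfl h
  | @cons w z u h r ih =>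
    intro hp hne
    by_cases hz : z = u
    · subst hz
      have : r = SimpleGraph.Walk.nil := (SimpleGraph.Walk.isPath_iff_eq_nil (p := r)).mp hp.of_cons
      subst this
      simp [Sym2.mem_iff]
    · have hw : ¬ (u ∈ s(w, z)) := by
        rw [Sym2.mem_iff]
        rintro (rfl | rfl)
        · exact hne rfl
        · exact hz rfl
      rw [SimpleGraph.Walk.edges_cons, List.filter_cons_of_neg (by simpa using hw)]
      exact ih hp.of_cons hz

lemma cycle_start_filter_two {V : Type*} [DecidableEq V] {G : SimpleGraph V}
    {u : V} (c : G.Walk u u) (hc : c.IsCycle) :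
    (c.edges.filter (fun e => decide (u ∈ e))).length = 2 := by
  cases c with
  | nil => exact absurd hc (by simp [SimpleGraph.Walk.isCycle_def])
  | @cons _ z _ h q =>
    have hq : q.IsPath := by
      constructor
      · have := hc.isTrail.edges_nodup
        rw [SimpleGraph.Walk.edges_cons] at this
        exact ⟨(List.nodup_cons.mp this).2⟩
      · have := hc.2
        simpa using this
    rw [SimpleGraph.Walk.edges_cons, List.filter_cons_of_pos (by simp)]
    simp only [List.length_cons]
    rw [path_filter_one q hq (fun hzu => ((hzu ▸ h).ne rfl))]

lemma cycle_filter_two {V : Type*} [DecidableEq V] {G : SimpleGraph V} {v u : V}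
    (c : G.Walk v v) (hc : c.IsCycle) (hu : u ∈ c.support) :
    (c.edges.toFinset.filter (fun e => u ∈ e)).card = 2 := by
  have hnd : c.edges.Nodup := hc.isTrail.edges_nodup
  have h1 : (c.edges.toFinset.filter (fun e => u ∈ e)) =
      (c.edges.filter (fun e => decide (u ∈ e))).toFinset := by
    rw [List.toFinset_filter]
    simp
  rw [h1, List.toFinset_card_of_nodup (hnd.filter _)]
  have hperm : ((c.rotate u hu).edges.filter (fun e => decide (u ∈ e))).length
      = (c.edges.filter (fun e => decide (u ∈ e))).length :=
    ((c.rotate_edges u hu).perm.filter _).length_eq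
  rw [← hperm, cycle_start_filter_two (c.rotate u hu) (hc.rotate hu)]

lemma double_count {V : Type*} [DecidableEq V] (E : Finset (Sym2 V)) (A : Finset V) :
    ∑ x ∈ A, (E.filter (fun e => x ∈ e)).card
      = ∑ e ∈ E, (A.filter (fun x => x ∈ e)).card := by
  simp only [Finset.card_filter]
  exact Finset.sum_comm

lemma boundary_edge {V : Type*} {G : SimpleGraph V} (P : V → Prop) :
    ∀ {x y : V} (q : G.Walk x y), P x → ¬ P y →
    ∃ u w, s(u, w) ∈ q.edges ∧ P u ∧ ¬ P w := by
  intro x y q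
  induction q with
  | nil => intro h h'; exact absurd h h'
  | @cons x z y h r ih =>
    intro hx hy
    by_cases hz : P z
    · obtain ⟨u, w, hm, h1, h2⟩ := ih hz hy
      exact ⟨u, w, by simp [hm], h1, h2⟩
    · exact ⟨x, z, by simp, hx, hz⟩

/-! ### The two tile sets -/

def tileT (h : ℕ) : Finset (ℕ × ℕ) :=
  ((range h) ×ˢ (range h)).image (fun ij => (2*ij.1, 2*ij.2)) ∪
  ((range h) ×ˢ (range h)).image (fun ij => (2*h+1+2*ij.1, 2*h+1+2*ij.2))

def tileS (h : ℕ) : Finset (ℕ × ℕ) :=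
  ((range h) ×ˢ (range h)).image (fun ij => (2*ij.1+1, 2*h+2*ij.2)) ∪
  ((range h) ×ˢ (range h)).image (fun ij => (2*h+2*ij.1, 2*ij.2+1))

lemma mem_tileT {h x y : ℕ} : (x, y) ∈ tileT h ↔
    (x % 2 = 0 ∧ y % 2 = 0 ∧ x < 2*h ∧ y < 2*h) ∨
    (x % 2 = 1 ∧ y % 2 = 1 ∧ 2*h < x ∧ x < 4*h ∧ 2*h < y ∧ y < 4*h) := by
  simp only [tileT, mem_union, mem_image, mem_product, mem_range, Prod.ext_iff]
  constructor
  · rintro (⟨⟨i, j⟩, ⟨hi, hj⟩, hx, hy⟩ | ⟨⟨i, j⟩, ⟨hi, hj⟩, hx, hy⟩) <;> simp_all <;> omega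
  · rintro (⟨h1, h2, h3, h4⟩ | ⟨h1, h2, h3, h4, h5, h6⟩)
    · exact Or.inl ⟨(x/2, y/2), by constructor <;> omega, by omega, by omega⟩
    · exact Or.inr ⟨((x-2*h-1)/2, (y-2*h-1)/2), by constructor <;> omega, by omega, by omega⟩

lemma mem_tileS {h x y : ℕ} : (x, y) ∈ tileS h ↔
    (x % 2 = 1 ∧ x < 2*h ∧ y % 2 = 0 ∧ 2*h ≤ y ∧ y < 4*h) ∨
    (x % 2 = 0 ∧ 2*h ≤ x ∧ x < 4*h ∧ y % 2 = 1 ∧ y < 2*h) := by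
  simp only [tileS, mem_union, mem_image, mem_product, mem_range, Prod.ext_iff]
  constructor
  · rintro (⟨⟨i, j⟩, ⟨hi, hj⟩, hx, hy⟩ | ⟨⟨i, j⟩, ⟨hi, hj⟩, hx, hy⟩) <;> simp_all <;> omega
  · rintro (⟨h1, h2, h3, h4, h5⟩ | ⟨h1, h2, h3, h4, h5⟩)
    · exact Or.inl ⟨(x/2, (y-2*h)/2), by constructor <;> omega, by omega, by omega⟩
    · exact Or.inr ⟨((x-2*h)/2, y/2), by constructor <;> omega, by omega, by omega⟩

lemma tile_disjoint (h : ℕ) : Disjoint (tileT h) (tileS h) := by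
  rw [Finset.disjoint_left]
  rintro ⟨x, y⟩ hT hS
  rw [mem_tileT] at hT; rw [mem_tileS] at hS
  omega

lemma tile_card (h : ℕ) : (tileT h).card = (tileS h).card := by
  have inj : ∀ (f : ℕ × ℕ → ℕ × ℕ), (∀ p q : ℕ × ℕ, f p = f q → p = q) →
      ∀ s : Finset (ℕ × ℕ), (s.image f).card = s.card := fun f hf s =>
    Finset.card_image_of_injective s hf
  have d1 : Disjoint (((range h) ×ˢ (range h)).image (fun ij => (2*ij.1, 2*ij.2)))
      (((range h) ×ˢ (range h)).image (fun ij => (2*h+1+2*ij.1, 2*h+1+2*ij.2))) := by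
    rw [Finset.disjoint_left]
    rintro ⟨x, y⟩ h1 h2
    simp only [mem_image, mem_product, mem_range, Prod.ext_iff] at h1 h2
    obtain ⟨⟨i, j⟩, ⟨hi, hj⟩, hx, hy⟩ := h1
    obtain ⟨⟨i', j'⟩, ⟨hi', hj'⟩, hx', hy'⟩ := h2
    simp_all; omega
  have d2 : Disjoint (((range h) ×ˢ (range h)).image (fun ij => (2*ij.1+1, 2*h+2*ij.2)))
      (((range h) ×ˢ (range h)).image (fun ij => (2*h+2*ij.1, 2*ij.2+1))) := by
    rw [Finset.disjoint_left]
    rintro ⟨x, y⟩ h1 h2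
    simp only [mem_image, mem_product, mem_range, Prod.ext_iff] at h1 h2
    obtain ⟨⟨i, j⟩, ⟨hi, hj⟩, hx, hy⟩ := h1
    obtain ⟨⟨i', j'⟩, ⟨hi', hj'⟩, hx', hy'⟩ := h2
    simp_all; omega
  rw [tileT, tileS, Finset.card_union_of_disjoint d1, Finset.card_union_of_disjoint d2]
  rw [inj _ (by intro p q hpq; simp [Prod.ext_iff] at hpq; exact Prod.ext (by omega) (by omega)) _,
      inj _ (by intro p q hpq; simp [Prod.ext_iff] at hpq; exact Prod.ext (by omega) (by omega)) _,
      inj _ (by intro p q hpq; simp [Prod.ext_iff] at hpq; exact Prod.ext (by omega) (by omega)) _,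
      inj _ (by intro p q hpq; simp [Prod.ext_iff] at hpq; exact Prod.ext (by omega) (by omega)) _]

lemma adjT {h a : ℕ} (hA : a = 2*h) {u w : ℕ × ℕ} (hT : u ∈ tileT h)
    (hadj : (knightGraph a 1).Adj u w) (hw1 : w.1 < 2*a) (hw2 : w.2 < 2*a) :
    w ∈ tileS h := by
  subst hA
  obtain ⟨ux, uy⟩ := u
  obtain ⟨wx, wy⟩ := w
  rw [mem_tileT] at hT
  rw [mem_tileS]
  rw [knightGraph, SimpleGraph.fromRel_adj] at hadj
  obtain ⟨-, hrel⟩ := hadj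
  simp only at hrel hw1 hw2
  omega

end NoTourAux

open NoTourAux Finset SimpleGraph in
/-- For even `a`, the (a,1) knight's graph on `[2a]^2` is not Hamiltonian. -/
theorem no_tour_smallest_board (a : ℕ) (ha : Even a) :
    ¬ ∃ (v : ℕ × ℕ) (p : (knightGraph a 1).Walk v v), IsBoardTour a 1 (2 * a) p := by
  rintro ⟨v, p, hcyc, hsupp⟩
  obtain ⟨k, hk⟩ := ha
  have hk2 : a = 2 * k := by omega
  rcases Nat.eq_zero_or_pos k with rfl | hk1
  · have h0 := (hsupp v).mp p.start_mem_support
    omega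
  have hpnil : ¬ p.Nil := by
    rw [SimpleGraph.Walk.nil_iff_length_eq]
    have := hcyc.three_le_length
    omega
  have h00 : ((0 : ℕ), (0 : ℕ)) ∈ p.support := (hsupp (0, 0)).mpr ⟨by omega, by omega⟩
  set c := p.rotate _ h00 with hc_def
  have hc : c.IsCycle := hcyc.rotate h00
  have hcsupp : ∀ x : ℕ × ℕ, x ∈ c.support ↔ (x.1 < 2 * a ∧ x.2 < 2 * a) := by
    intro x
    rw [hc_def, mem_support_rotate_iff p hpnil h00]
    exact hsupp x
  set E := c.edges.toFinset with hE_def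
  have hinc : ∀ u ∈ c.support, (E.filter (fun e => u ∈ e)).card = 2 :=
    fun u hu => cycle_filter_two c hc hu
  -- endpoints of E-edges are on the board and adjacent
  have hboard : ∀ {x y : ℕ × ℕ}, s(x, y) ∈ c.edges →
      (knightGraph a 1).Adj x y ∧ x.1 < 2*a ∧ x.2 < 2*a ∧ y.1 < 2*a ∧ y.2 < 2*a := by
    intro x y hxy
    have hx := (hcsupp x).mp (c.fst_mem_support_of_mem_edges hxy)
    have hy := (hcsupp y).mp (c.snd_mem_support_of_mem_edges hxy)
    exact ⟨c.adj_of_mem_edges hxy, hx.1, hx.2, hy.1, hy.2⟩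
  have hTsub : ∀ x ∈ tileT k, x ∈ c.support := by
    rintro ⟨x, y⟩ hx
    rw [hcsupp]
    rw [mem_tileT] at hx
    constructor <;> simp <;> omega
  have hSsub : ∀ x ∈ tileS k, x ∈ c.support := by
    rintro ⟨x, y⟩ hx
    rw [hcsupp]
    rw [mem_tileS] at hx
    constructor <;> simp <;> omega
  have sumT : ∑ e ∈ E, ((tileT k).filter (fun x => x ∈ e)).card = (tileT k).card * 2 := by
    rw [← double_count, Finset.sum_congr rfl (fun x hx => hinc x (hTsub x hx)),
      Finset.sum_const, smul_eq_mul]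
  have sumS : ∑ e ∈ E, ((tileS k).filter (fun x => x ∈ e)).card = (tileS k).card * 2 := by
    rw [← double_count, Finset.sum_congr rfl (fun x hx => hinc x (hSsub x hx)),
      Finset.sum_const, smul_eq_mul]
  have pointwise : ∀ e ∈ E, ((tileT k).filter (fun x => x ∈ e)).card
      ≤ ((tileS k).filter (fun x => x ∈ e)).card := by
    intro e he
    induction e using Sym2.ind with
    | _ x y =>
      have hmemc : s(x, y) ∈ c.edges := List.mem_toFinset.mp he
      obtain ⟨hadj, hx1, hx2, hy1, hy2⟩ := hboard hmemc
      by_cases hxT : x ∈ tileT k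
      · have hyS : y ∈ tileS k := adjT hk2 hxT hadj hy1 hy2
        have hynT : y ∉ tileT k := fun hyT =>
          Finset.disjoint_left.mp (tile_disjoint k) hyT hyS
        have hle1 : ((tileT k).filter (fun z => z ∈ s(x, y))).card ≤ 1 := by
          apply Finset.card_le_one.mpr
          intro z hz z' hz'
          simp only [Finset.mem_filter, Sym2.mem_iff] at hz hz'
          rcases hz.2 with rfl | rfl
          · rcases hz'.2 with rfl | rfl
            · rfl
            · exact absurd hz'.1 hynT
          · exact absurd hz.1 hynT
        have hge1 : 1 ≤ ((tileS k).filter (fun z => z ∈ s(x, y))).card := by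
          rw [Nat.one_le_iff_ne_zero, ← Nat.pos_iff_ne_zero, Finset.card_pos]
          exact ⟨y, Finset.mem_filter.mpr ⟨hyS, Sym2.mem_mk_right _ _⟩⟩
        omega
      · by_cases hyT : y ∈ tileT k
        · have hxS : x ∈ tileS k := adjT hk2 hyT hadj.symm hx1 hx2
          have hle1 : ((tileT k).filter (fun z => z ∈ s(x, y))).card ≤ 1 := by
            apply Finset.card_le_one.mpr
            intro z hz z' hz'
            simp only [Finset.mem_filter, Sym2.mem_iff] at hz hz'
            rcases hz.2 with rfl | rfl
            · exact absurd hz.1 hxT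
            · rcases hz'.2 with rfl | rfl
              · exact absurd hz'.1 hxT
              · rfl
          have hge1 : 1 ≤ ((tileS k).filter (fun z => z ∈ s(x, y))).card := by
            rw [Nat.one_le_iff_ne_zero, ← Nat.pos_iff_ne_zero, Finset.card_pos]
            exact ⟨x, Finset.mem_filter.mpr ⟨hxS, Sym2.mem_mk_left _ _⟩⟩
          omega
        · have : ((tileT k).filter (fun z => z ∈ s(x, y))).card = 0 := by
            rw [Finset.card_eq_zero, Finset.filter_eq_empty_iff]
            intro z hz
            rw [Sym2.mem_iff]
            rintro (rfl | rfl)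
            · exact hxT hz
            · exact hyT hz
          omega
  have alleq : ∀ e ∈ E, ((tileT k).filter (fun x => x ∈ e)).card
      = ((tileS k).filter (fun x => x ∈ e)).card :=
    (Finset.sum_eq_sum_iff_of_le pointwise).mp (by rw [sumT, sumS, tile_card])
  -- find a boundary edge
  have h00T : ((0 : ℕ), (0 : ℕ)) ∈ tileT k := by
    rw [mem_tileT]; left; omega
  have h11 : ((1 : ℕ), (1 : ℕ)) ∈ c.support := (hcsupp _).mpr ⟨by omega, by omega⟩
  obtain ⟨u, w, hmem, hPu, hPw⟩ :=
    boundary_edge (fun z => z ∈ tileT k ∨ z ∈ tileS k) (c.takeUntil (1, 1) h11)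
      (Or.inl h00T)
      (by
        rintro (h1 | h1)
        · rw [mem_tileT] at h1; omega
        · rw [mem_tileS] at h1; omega)
  have hmemc : s(u, w) ∈ c.edges := SimpleGraph.Walk.edges_takeUntil_subset c h11 hmem
  obtain ⟨hadj, hu1, hu2, hw1, hw2⟩ := hboard hmemc
  rcases hPu with huT | huS
  · exact hPw (Or.inr (adjT hk2 huT hadj hw1 hw2))
  · have he : s(u, w) ∈ E := List.mem_toFinset.mpr hmemc
    have heq := alleq _ he
    have hT0 : ((tileT k).filter (fun z => z ∈ s(u, w))).card = 0 := by
      rw [Finset.card_eq_zero, Finset.filter_eq_empty_iff]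
      intro z hz
      rw [Sym2.mem_iff]
      rintro (rfl | rfl)
      · exact Finset.disjoint_left.mp (tile_disjoint k) hz huS
      · exact hPw (Or.inl hz)
    have hS1 : 0 < ((tileS k).filter (fun z => z ∈ s(u, w))).card :=
      Finset.card_pos.mpr ⟨u, Finset.mem_filter.mpr ⟨huS, Sym2.mem_mk_left _ _⟩⟩
    omega
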